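/- Let v : [0,∞) → [0,∞) be a convex, increasing, twice continuously differentiable function with v(0) = 0 satisfying conditions (V1) and (V2), such that lim_{x→+∞} (v(x+1) − v(x))/x = 0 and there exists C > 0 with v''(x) ≤ C/x for all x ≥ 1. Then the sequence (exp(v(n)))_{n≥0} belongs to the class 𝓜, i.e. it is increasing, has first term 1, and satisfies conditions (i1), (i2), (i3), (i4). -/

import Mathlib

open Filter

/-- Condition (i1): logarithmic convexity. -/
def CondI1 (L : ℕ → ℝ) : Prop := ∀ n : ℕ, (L (n + 1)) ^ 2 ≤ L n * L (n + 2)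

/-- Condition (i2). -/
def CondI2 (L : ℕ → ℝ) : Prop :=
  ∃ H₁ : ℝ, 0 < H₁ ∧ ∃ H₂ : ℝ, 0 < H₂ ∧ ∀ n : ℕ, H₁ * H₂ ^ n * n.factorial ≤ L n

/-- Condition (i3). -/
def CondI3 (L : ℕ → ℝ) : Prop :=
  ∀ s : ℝ, 1 < s →
    1 < Filter.liminf (fun n : ℕ => (L ⌊s * (n : ℝ)⌋₊ / (L n) ^ s) ^ ((1 : ℝ) / n)) Filter.atTop

/-- Condition (i4). -/
def CondI4 (L : ℕ → ℝ) : Prop :=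
  ∀ δ : ℝ, 0 < δ → ∃ p : ℝ, 0 < p ∧ ∃ t : ℝ, 1 < t ∧
    ∀ n m : ℕ, L (m + n) / (L m * (1 + δ) ^ m) ≤ p * t ^ n * L n

/-- The class 𝓜 of increasing sequences of positive reals with first term 1
satisfying (i1)-(i4). -/
def ClassM (L : ℕ → ℝ) : Prop :=
  (∀ n, 0 < L n) ∧ Monotone L ∧ L 0 = 1 ∧ CondI1 L ∧ CondI2 L ∧ CondI3 L ∧ CondI4 L

set_option maxHeartbeats 1600000 in
theorem stmt_3 (v : ℝ → ℝ) (C : ℝ) (hC : 0 < C)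
    (hnonneg : ∀ x ∈ Set.Ici (0 : ℝ), 0 ≤ v x)
    (hconv : ConvexOn ℝ (Set.Ici 0) v)
    (hmono : MonotoneOn v (Set.Ici 0))
    (hsmooth : ContDiffOn ℝ 2 v (Set.Ici 0))
    (hv0 : v 0 = 0)
    (hV1 : ∃ A B : ℝ, ∀ x : ℝ, 1 ≤ x → x * Real.log x + A * x + B ≤ v x)
    (hV2 : ∀ s : ℝ, 1 < s → ∃ η : ℝ, 0 < η ∧ ∃ m : ℝ,
      ∀ x : ℝ, 0 ≤ x → s * v x + η * x + m ≤ v (s * x))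
    (hlim : Tendsto (fun x : ℝ => (v (x + 1) - v x) / x) atTop (nhds 0))
    (hsecond : ∀ x : ℝ, 1 ≤ x → deriv (deriv v) x ≤ C / x) :
    ClassM (fun n : ℕ => Real.exp (v n)) := by
  -- smoothness package
  have hdiff : ∀ x : ℝ, 0 < x → DifferentiableAt ℝ v x := by
    intro x hx
    have hmem : Set.Ici (0:ℝ) ∈ nhds x :=
      Filter.mem_of_superset (isOpen_Ioi.mem_nhds hx) Set.Ioi_subset_Ici_self
    exact (hsmooth.contDiffAt hmem).differentiableAt (by norm_num)
  have hcd1 : ContDiffOn ℝ 1 (deriv v) (Set.Ioi 0) :=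
    (hsmooth.mono Set.Ioi_subset_Ici_self).deriv_of_isOpen isOpen_Ioi (by norm_num)
  have hdiff2 : ∀ x : ℝ, 0 < x → DifferentiableAt ℝ (deriv v) x := by
    intro x hx
    exact ((hcd1.differentiableOn (by norm_num)) x hx).differentiableAt (isOpen_Ioi.mem_nhds hx)
  have hcont1 : ContinuousOn (deriv v) (Set.Ioi 0) := hcd1.continuousOn
  -- key derivative comparison: x ↦ v'(x) - C log x antitone on [1,∞)
  have hK1 : ∀ x y : ℝ, 1 ≤ x → x ≤ y →
      deriv v y - C * Real.log y ≤ deriv v x - C * Real.log x := by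
    have hanti : AntitoneOn (fun x => deriv v x - C * Real.log x) (Set.Ici 1) := by
      apply antitoneOn_of_deriv_nonpos (convex_Ici 1)
      · apply ContinuousOn.sub
        · exact hcont1.mono (fun x hx => Set.mem_Ioi.2 (lt_of_lt_of_le one_pos (Set.mem_Ici.1 hx)))
        · exact (Real.continuousOn_log.mono (fun x hx => by
            simp only [Set.mem_compl_iff, Set.mem_singleton_iff]
            intro h; rw [h] at hx; exact absurd hx (by norm_num))).const_smul C |>.congr
            (fun x hx => by simp [smul_eq_mul])
      · rw [interior_Ici]
        intro x hx
        have hx0 : (0:ℝ) < x := lt_trans one_pos hx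
        exact ((hdiff2 x hx0).sub
          ((Real.differentiableAt_log hx0.ne').const_mul C)).differentiableWithinAt
      · rw [interior_Ici]
        intro x hx
        have hx0 : (0:ℝ) < x := lt_trans one_pos hx
        have h1 : HasDerivAt (fun x => deriv v x - C * Real.log x)
            (deriv (deriv v) x - C * x⁻¹) x :=
          ((hdiff2 x hx0).hasDerivAt).sub ((Real.hasDerivAt_log hx0.ne').const_mul C)
        rw [h1.deriv]
        have h2 := hsecond x hx.le
        rw [div_eq_mul_inv] at h2
        linarith
    intro x y hx hxy
    exact hanti (Set.mem_Ici.2 hx) (Set.mem_Ici.2 (le_trans hx hxy)) hxy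
  -- slope inequality from convexity
  have hslope : ∀ x y : ℝ, 0 ≤ x → x < y → v y - v x ≤ (y - x) * deriv v y := by
    intro x y hx hxy
    have h := hconv.slope_le_deriv (Set.mem_Ici.2 hx) (Set.mem_Ici.2 (by linarith))
      hxy (hdiff y (by linarith))
    rw [slope_def_field, div_le_iff₀ (by linarith)] at h
    linarith [h]
  -- lower bound : (y-1) v'(y) - C (y-1) ≤ v y
  have hlow : ∀ y : ℝ, 1 ≤ y → (y - 1) * deriv v y - C * (y - 1) ≤ v y := by
    intro y hy
    rcases eq_or_lt_of_le hy with rfl | hy1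
    · simpa using hnonneg 1 (by norm_num)
    set D := deriv v y with hD
    set F : ℝ → ℝ := fun x => v x + (y - x) * D - C * (y - x - x * Real.log y + x * Real.log x)
      with hF
    have hder : ∀ x : ℝ, 0 < x →
        HasDerivAt F (deriv v x - D - C * (Real.log x - Real.log y)) x := by
      intro x hx0
      have h1 : HasDerivAt (fun x : ℝ => (y - x) * D) (-D) x := by
        simpa using ((hasDerivAt_id x).const_sub y).mul_const D
      have h2 : HasDerivAt (fun x : ℝ => y - x - x * Real.log y + x * Real.log x)
          (-1 - Real.log y + (Real.log x + 1)) x := by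
        have h3 : HasDerivAt (fun x : ℝ => y - x - x * Real.log y) (-1 - Real.log y) x := by
          exact (((hasDerivAt_id x).const_sub y).sub
            ((hasDerivAt_id x).mul_const (Real.log y))).congr_deriv (by ring)
        exact h3.add (Real.hasDerivAt_mul_log hx0.ne')
      have := ((hdiff x hx0).hasDerivAt.add h1).sub (h2.const_mul C)
      exact this.congr_deriv (by ring)
    have hmonoF : MonotoneOn F (Set.Icc 1 y) := by
      apply monotoneOn_of_deriv_nonneg (convex_Icc 1 y)
      · intro x hx
        exact ((hder x (lt_of_lt_of_le one_pos hx.1)).differentiableAt.continuousAt).continuousWithinAt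
      · rw [interior_Icc]
        intro x hx
        exact (hder x (lt_trans one_pos hx.1)).differentiableAt.differentiableWithinAt
      · rw [interior_Icc]
        intro x hx
        rw [(hder x (lt_trans one_pos hx.1)).deriv]
        have := hK1 x y hx.1.le hx.2.le
        linarith
    have hFF := hmonoF (Set.mem_Icc.2 ⟨le_refl 1, hy⟩) (Set.mem_Icc.2 ⟨hy, le_refl y⟩) hy
    have e1 : F 1 = v 1 + (y - 1) * D - C * (y - 1 - Real.log y) := by
      simp [hF, Real.log_one]
    have e2 : F y = v y := by
      simp [hF]
    rw [e1, e2] at hFF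
    have h4 : 0 ≤ Real.log y := Real.log_nonneg hy
    have h5 := hnonneg 1 (by norm_num)
    nlinarith
  refine ⟨fun n => Real.exp_pos _, ?_, by simp [hv0], ?_, ?_, ?_, ?_⟩
  -- monotone
  · intro a b hab
    exact Real.exp_le_exp.2 (hmono (Set.mem_Ici.2 (Nat.cast_nonneg a))
      (Set.mem_Ici.2 (Nat.cast_nonneg b)) (Nat.cast_le.2 hab))
  -- (i1)
  · intro n
    have h1 : ((n:ℝ)) ∈ Set.Ici (0:ℝ) := Set.mem_Ici.2 (Nat.cast_nonneg n)
    have h2 : ((n:ℝ)+2) ∈ Set.Ici (0:ℝ) := Set.mem_Ici.2 (by positivity)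
    have h := hconv.2 h1 h2 (by norm_num : (0:ℝ) ≤ 1/2) (by norm_num : (0:ℝ) ≤ 1/2)
      (by norm_num)
    have e : (1/2:ℝ) • (n:ℝ) + (1/2:ℝ) • ((n:ℝ)+2) = (n:ℝ)+1 := by
      rw [smul_eq_mul, smul_eq_mul]; ring
    rw [e, smul_eq_mul, smul_eq_mul] at h
    have h' : 2 * v ((n:ℝ)+1) ≤ v n + v ((n:ℝ)+2) := by linarith
    show (Real.exp (v ((n+1 : ℕ):ℝ))) ^ 2 ≤ Real.exp (v ((n:ℕ):ℝ)) * Real.exp (v ((n+2 : ℕ):ℝ))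
    simp only [sq]
    rw [← Real.exp_add, ← Real.exp_add]
    push_cast
    exact Real.exp_le_exp.2 (by linarith)
  -- (i2)
  · obtain ⟨A, B, hAB⟩ := hV1
    refine ⟨min 1 (Real.exp B), lt_min one_pos (Real.exp_pos B),
      min 1 (Real.exp A), lt_min one_pos (Real.exp_pos A), ?_⟩
    intro n
    match n with
    | 0 => simpa [hv0] using min_le_left (1:ℝ) (Real.exp B)
    | (k+1) =>
      set n' := k + 1 with hn'
      have hn1 : (1:ℝ) ≤ (n':ℝ) := by exact_mod_cast Nat.one_le_iff_ne_zero.2 (by omega)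
      have hfact : ((n'.factorial : ℝ)) ≤ (n':ℝ)^(n' : ℕ) := by
        exact_mod_cast Nat.factorial_le_pow n'
      have hexp : ((n':ℝ))^(n':ℕ) = Real.exp ((n':ℝ) * Real.log (n':ℝ)) := by
        rw [Real.exp_nat_mul, Real.exp_log (by linarith)]
      calc min 1 (Real.exp B) * min 1 (Real.exp A) ^ (n':ℕ) * (n'.factorial:ℝ)
          ≤ Real.exp B * Real.exp A ^ (n':ℕ) * (n':ℝ)^(n':ℕ) := by
            apply mul_le_mul
            · apply mul_le_mul (min_le_right _ _)
                (pow_le_pow_left₀ (le_min zero_le_one (Real.exp_pos A).le) (min_le_right _ _) _)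
                (by positivity) (Real.exp_pos B).le
            · exact hfact
            · positivity
            · positivity
        _ = Real.exp ((n':ℝ) * Real.log (n':ℝ) + A * (n':ℝ) + B) := by
            rw [hexp, ← Real.exp_nat_mul, ← Real.exp_add, ← Real.exp_add]
            ring_nf
        _ ≤ Real.exp (v (n':ℝ)) := Real.exp_le_exp.2 (hAB _ hn1)
  -- (i3)
  · intro s hs
    obtain ⟨η, hη, m0, hV2s⟩ := hV2 s hs
    set G := |deriv v 1| with hG
    have hfeq : ∀ n : ℕ, (Real.exp (v ⌊s * (n : ℝ)⌋₊) / (Real.exp (v n)) ^ s) ^ ((1 : ℝ) / n)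
        = Real.exp ((v ⌊s * (n : ℝ)⌋₊ - v n * s) * (1 / (n:ℝ))) := by
      intro n
      rw [Real.rpow_def_of_pos (Real.exp_pos _), Real.rpow_def_of_pos (by positivity),
        Real.log_div (Real.exp_pos _).ne' (by positivity), Real.log_exp]
      simp [Real.log_exp]
    simp only [hfeq]
    have hub : ∀ᶠ n : ℕ in atTop,
        Real.exp ((v ⌊s * (n : ℝ)⌋₊ - v n * s) * (1 / (n:ℝ)))
          ≤ Real.exp ((s-1) * (G + 2*C + C * Real.log s)) := by
      filter_upwards [eventually_ge_atTop 1] with n hn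
      have hN1 : (1:ℝ) ≤ (n:ℝ) := by exact_mod_cast hn
      set N := (n:ℝ)
      have hN0 : (0:ℝ) < N := by linarith
      have hfl : (⌊s * N⌋₊ : ℝ) ≤ s * N := Nat.floor_le (by positivity)
      have h1 : v ⌊s * N⌋₊ ≤ v (s * N) :=
        hmono (Set.mem_Ici.2 (Nat.cast_nonneg _)) (Set.mem_Ici.2 (by positivity)) hfl
      have h2 : v (s * N) - v N ≤ (s * N - N) * deriv v (s * N) := by
        have := hslope N (s * N) (by linarith) (by nlinarith)
        linarith
      have h3 : deriv v (s * N) ≤ deriv v N + C * Real.log s := by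
        have := hK1 N (s * N) hN1 (by nlinarith)
        rw [Real.log_mul (by linarith) (by linarith)] at this
        linarith
      have h4 : (N - 1) * deriv v N - C * (N - 1) ≤ v N := hlow N hN1
      have h5 : deriv v N ≤ G + C * (N - 1) := by
        have h1' := hK1 1 N le_rfl hN1
        rw [Real.log_one] at h1'
        have h2' : Real.log N ≤ N - 1 := by
          have := Real.log_le_sub_one_of_pos hN0; linarith
        have h3' : deriv v 1 ≤ G := le_abs_self _
        nlinarith [Real.log_nonneg hN1]
      have hlgs : 0 ≤ Real.log s := Real.log_nonneg hs.le
      have hGN : G ≤ G * N := le_mul_of_one_le_right (abs_nonneg _) hN1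
      have hmain : v ⌊s * N⌋₊ - v N * s ≤ N * ((s-1) * (G + 2*C + C * Real.log s)) := by
        nlinarith [mul_le_mul_of_nonneg_right h3 (by nlinarith : (0:ℝ) ≤ (s-1)*N),
          mul_le_mul_of_nonneg_left h4 (by linarith : (0:ℝ) ≤ s - 1),
          mul_le_mul_of_nonneg_left h5 (by linarith : (0:ℝ) ≤ s - 1),
          mul_le_mul_of_nonneg_left hGN (by linarith : (0:ℝ) ≤ s - 1),
          mul_nonneg (mul_nonneg (by linarith : (0:ℝ) ≤ s-1) hC.le)
            (by linarith : (0:ℝ) ≤ N - 1)]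
      have : (v ⌊s * N⌋₊ - v N * s) * (1 / N) ≤ (s-1) * (G + 2*C + C * Real.log s) := by
        rw [mul_one_div, div_le_iff₀ hN0]
        linarith [hmain]
      exact Real.exp_le_exp.2 this
    have hηs : 0 < η / (2*s) := by positivity
    have h1 : ∀ᶠ x : ℝ in atTop, (v (x + 1) - v x) / x < η / (2*s) :=
      hlim.eventually (gt_mem_nhds hηs)
    have hφ : Tendsto (fun n : ℕ => ((⌊s * (n : ℝ)⌋₊ : ℕ) : ℝ)) atTop atTop := by
      apply tendsto_atTop_mono ?_ tendsto_natCast_atTop_atTop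
      intro n
      exact_mod_cast Nat.cast_le.2 (Nat.le_floor (by nlinarith [Nat.cast_nonneg (α := ℝ) n]))
    have h2 := hφ.eventually (h1.and (eventually_ge_atTop (1:ℝ)))
    have h3 : ∀ᶠ n : ℕ in atTop, -(η/4) < m0 / (n:ℝ) :=
      (tendsto_const_div_atTop_nhds_zero_nat m0).eventually (lt_mem_nhds (by linarith))
    have hlower : ∀ᶠ n : ℕ in atTop,
        Real.exp (η/4) ≤ Real.exp ((v ⌊s * (n : ℝ)⌋₊ - v n * s) * (1 / (n:ℝ))) := by
      filter_upwards [h2, h3, eventually_ge_atTop 1] with n hx hm hn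
      obtain ⟨hx1, hx2⟩ := hx
      set N := (n:ℝ) with hN
      have hN1 : (1:ℝ) ≤ N := by rw [hN]; exact_mod_cast hn
      have hN0 : (0:ℝ) < N := by linarith
      set x := ((⌊s * N⌋₊ : ℕ) : ℝ) with hxdef
      have hx0 : (0:ℝ) < x := by linarith
      have hgap : v (x + 1) - v x ≤ (η/(2*s)) * x := by
        have := (div_lt_iff₀ hx0).1 hx1
        linarith
      have hxle : x ≤ s * N := Nat.floor_le (by positivity)
      have hgap2 : (η/(2*s)) * x ≤ η * N / 2 := by
        rw [div_mul_eq_mul_div, div_le_div_iff₀ (by linarith) (by norm_num)]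
        nlinarith
      have hsx : s * N ≤ x + 1 := (Nat.lt_floor_add_one (s * N)).le
      have hmono1 : v (s * N) ≤ v (x + 1) :=
        hmono (Set.mem_Ici.2 (by positivity)) (Set.mem_Ici.2 (by linarith)) hsx
      have hV := hV2s N (by linarith)
      have hg : η * N / 2 + m0 ≤ v x - v N * s := by linarith
      have hm' : -(η/4) * N < m0 := (lt_div_iff₀ hN0).1 hm
      apply Real.exp_le_exp.2
      rw [mul_one_div, le_div_iff₀ hN0]
      linarith
    have hcb : Filter.IsCoboundedUnder (· ≥ ·) Filter.atTop
        (fun n : ℕ => Real.exp ((v ⌊s * (n : ℝ)⌋₊ - v n * s) * (1 / (n:ℝ)))) :=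
      Filter.isCoboundedUnder_ge_of_eventually_le Filter.atTop hub
    calc (1:ℝ) < Real.exp (η/4) := by
          rw [show (1:ℝ) = Real.exp 0 from (Real.exp_zero).symm]
          exact Real.exp_lt_exp.2 (by positivity)
      _ ≤ _ := Filter.le_liminf_of_le hcb hlower
  -- (i4)
  · intro δ hδ
    set G := |deriv v 1| with hG
    set ε := Real.log (1 + δ) with hε
    have hε0 : 0 < ε := Real.log_pos (by linarith)
    set K := G + 2*C + (ε + C * Real.log (C/ε)) with hK
    set K' := max K 1 with hK'
    have hkey : ∀ n m : ℕ, v ((m:ℝ) + n) - v m - v n ≤ ε * m + K' * n := by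
      intro n m
      match n with
      | 0 =>
        simp [hv0]
        positivity
      | (k+1) =>
        set n' : ℕ := k + 1 with hn'
        have hN1 : (1:ℝ) ≤ (n':ℝ) := by exact_mod_cast Nat.one_le_iff_ne_zero.2 (by omega)
        have hM0 : (0:ℝ) ≤ (m:ℝ) := Nat.cast_nonneg m
        set N := (n':ℝ); set M := (m:ℝ)
        have hi : v (M + N) - v M ≤ N * deriv v (M + N) := by
          have := hslope M (M + N) hM0 (by linarith)
          linarith
        have hii : deriv v (M + N) ≤ deriv v N + C * (Real.log (M + N) - Real.log N) := by
          have := hK1 N (M + N) hN1 (by linarith)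
          linarith
        have hiii : (N - 1) * deriv v N - C * (N - 1) ≤ v N := hlow N hN1
        have hiv : deriv v N ≤ G + C * (N - 1) := by
          have h1 := hK1 1 N le_rfl hN1
          rw [Real.log_one] at h1
          have h2 : Real.log N ≤ N - 1 := by
            have := Real.log_le_sub_one_of_pos (by linarith : (0:ℝ) < N)
            linarith
          have h3 : deriv v 1 ≤ G := le_abs_self _
          nlinarith [Real.log_nonneg hN1]
        have hv5 : C * (Real.log (M + N) - Real.log N) * N
            ≤ ε * M + (ε + C * Real.log (C/ε)) * N := by
          have hu : Real.log (M + N) - Real.log N = Real.log (1 + M/N) := by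
            rw [← Real.log_div (by linarith) (by linarith)]
            congr 1
            field_simp
            ring
          rw [hu]
          set u := M / N with hu'
          have hu0 : 0 ≤ u := div_nonneg hM0 (by linarith)
          have hz : (0:ℝ) < (1 + u) * ε / C := by positivity
          have h6 := Real.log_le_sub_one_of_pos hz
          rw [Real.log_div (by positivity) hC.ne', Real.log_mul (by linarith) hε0.ne'] at h6
          have h7 : C * Real.log (1 + u) ≤ ε * u + (ε + C * (Real.log C - Real.log ε)) - C := by
            have h8 : C * (Real.log (1 + u) + Real.log ε - Real.log C)
                ≤ C * ((1 + u) * ε / C - 1) := mul_le_mul_of_nonneg_left h6 hC.le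
            have h9 : C * ((1 + u) * ε / C - 1) = ε + ε * u - C := by
              field_simp
            nlinarith
          have h10 : Real.log (C / ε) = Real.log C - Real.log ε := Real.log_div hC.ne' hε0.ne'
          have h11 : u * N = M := by
            rw [hu']; field_simp
          have h12 := mul_le_mul_of_nonneg_right h7 (by linarith : (0:ℝ) ≤ N)
          have h13 : ε * (u * N) = ε * M := by rw [h11]
          rw [h10]
          linarith [h12, h13, mul_nonneg hC.le (by linarith : (0:ℝ) ≤ N)]
        have hKK' : K ≤ K' := le_max_left _ _
        have hGN : G ≤ G * N := le_mul_of_one_le_right (abs_nonneg _) hN1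
        have hmain : v (M + N) - v M - v N ≤ ε * M + K * N := by
          have h14 := mul_le_mul_of_nonneg_right hii (by linarith : (0:ℝ) ≤ N)
          rw [hK]
          linarith [h14, hi, hiii, hiv, hv5, hGN, hC.le]
        have : K * N ≤ K' * N := mul_le_mul_of_nonneg_right hKK' (by linarith)
        linarith
    refine ⟨1, one_pos, Real.exp K', by
        calc (1:ℝ) = Real.exp 0 := (Real.exp_zero).symm
          _ < Real.exp K' := Real.exp_lt_exp.2 (lt_of_lt_of_le one_pos (le_max_right K 1)), ?_⟩
    intro n m
    have hd : (1 + δ) ^ m = Real.exp (ε * m) := by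
      rw [mul_comm, Real.exp_nat_mul, Real.exp_log (by linarith)]
    have ht : Real.exp K' ^ n = Real.exp (K' * n) := by
      rw [mul_comm, Real.exp_nat_mul]
    show Real.exp (v ((m + n : ℕ):ℝ)) / (Real.exp (v ((m:ℕ):ℝ)) * (1 + δ) ^ m)
      ≤ 1 * Real.exp K' ^ n * Real.exp (v ((n:ℕ):ℝ))
    rw [hd, ht, div_le_iff₀ (by positivity), one_mul, ← Real.exp_add, ← Real.exp_add,
      ← Real.exp_add, Real.exp_le_exp]
    have := hkey n m
    push_cast
    linarith
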